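/- Let the map from polynomials to finite-type data be the evaluation of elementary symmetric functions: the invariant ring (ℚ[x_1,x_2,x_3]/(x_1+x_2+x_3))^{S_3 ⋉ (±1)} (symmetric polynomials invariant under simultaneous sign change) is isomorphic as a graded ring to ℚ[σ_2, σ_3^2], where σ_i is the i-th elementary symmetric polynomial in x_1,x_2,x_3. -/

import Mathlib

open MvPolynomial

/-- The elementary symmetric polynomial `σ_k` in `x₁, x₂, x₃` over `ℚ`. -/
noncomputable def sigma (k : ℕ) : MvPolynomial (Fin 3) ℚ := esymm (Fin 3) ℚ k

/-- The ideal `(σ₁) = (x₁ + x₂ + x₃)`. -/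
noncomputable def idealSigma1 : Ideal (MvPolynomial (Fin 3) ℚ) :=
  Ideal.span {sigma 1}

/-- The two generators `σ₂` and `σ₃²`. -/
noncomputable def invGens : Fin 2 → MvPolynomial (Fin 3) ℚ := ![sigma 2, sigma 3 ^ 2]

/-- The simultaneous sign change `x_i ↦ −x_i`. -/
noncomputable def signChange : MvPolynomial (Fin 3) ℚ →ₐ[ℚ] MvPolynomial (Fin 3) ℚ :=
  aeval fun i => -(X i)

namespace InvariantAux

lemma esymm_homog (k : ℕ) : (esymm (Fin 3) ℚ k).IsHomogeneous k := by
  rw [esymm]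
  apply IsHomogeneous.sum
  intro t ht
  have hc : t.card = k := (Finset.mem_powersetCard.mp ht).2
  have := IsHomogeneous.prod t (fun i => (X i : MvPolynomial (Fin 3) ℚ)) (fun _ => 1)
    (fun i _ => isHomogeneous_X ℚ i)
  simpa [Finset.sum_const, hc] using this

lemma signChange_esymm (k : ℕ) :
    signChange (esymm (Fin 3) ℚ k) = (-1) ^ k * esymm (Fin 3) ℚ k := by
  rw [esymm, map_sum, Finset.mul_sum]
  refine Finset.sum_congr rfl fun t ht => ?_
  have hc : t.card = k := (Finset.mem_powersetCard.mp ht).2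
  rw [map_prod]
  have : ∀ i ∈ t, signChange (X i) = -1 * X i := by
    intro i _
    simp [signChange]
  rw [Finset.prod_congr rfl this, Finset.prod_mul_distrib, Finset.prod_const, hc]

lemma signChange_sigma2 : signChange (sigma 2) = sigma 2 := by
  rw [sigma, signChange_esymm]; ring

lemma signChange_sigma3 : signChange (sigma 3) = -sigma 3 := by
  rw [sigma, signChange_esymm]; ring

lemma signChange_sigma1 : signChange (sigma 1) = -sigma 1 := by
  rw [sigma, signChange_esymm]; ring

lemma fin2_finsupp (m : Fin 2 →₀ ℕ) :
    Finsupp.single (0 : Fin 2) (m 0) + Finsupp.single (1 : Fin 2) (m 1) = m := by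
  ext i
  fin_cases i <;> simp [Finsupp.single_apply]

lemma aeval_sq_monomial (m : Fin 2 →₀ ℕ) (c : ℚ) :
    aeval ![X 0, X 1 ^ 2] (monomial m c) =
      (monomial (Finsupp.single 0 (m 0) + Finsupp.single 1 (2 * m 1)) c
        : MvPolynomial (Fin 2) ℚ) := by
  rw [aeval_monomial, monomial_eq,
    Finsupp.prod_fintype _ _ (fun i => pow_zero _),
    Finsupp.prod_fintype _ _ (fun i => pow_zero _),
    Fin.prod_univ_two, Fin.prod_univ_two]
  simp [Finsupp.single_apply, pow_mul, algebraMap_eq]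

lemma aeval_nu_monomial (m : Fin 2 →₀ ℕ) (c : ℚ) :
    aeval ![X 0, -X 1] (monomial m c) =
      (monomial m ((-1) ^ (m 1) * c) : MvPolynomial (Fin 2) ℚ) := by
  rw [aeval_monomial, monomial_eq,
    Finsupp.prod_fintype _ _ (fun i => pow_zero _),
    Finsupp.prod_fintype _ _ (fun i => pow_zero _),
    Fin.prod_univ_two, Fin.prod_univ_two]
  simp only [Matrix.cons_val_zero, Matrix.cons_val_one, Matrix.head_cons, algebraMap_eq]
  rw [neg_pow (X 1 : MvPolynomial (Fin 2) ℚ), C_mul, C_pow, C_neg, C_1]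
  ring

noncomputable def d2 (m : Fin 2 →₀ ℕ) : Fin 2 →₀ ℕ :=
  Finsupp.single 0 (m 0) + Finsupp.single 1 (2 * m 1)

lemma d2_inj : Function.Injective d2 := by
  intro a b h
  have h0 := DFunLike.congr_fun h (0 : Fin 2)
  have h1 := DFunLike.congr_fun h (1 : Fin 2)
  simp only [d2, Finsupp.add_apply, Finsupp.single_apply] at h0 h1
  norm_num at h0 h1
  ext i
  fin_cases i
  · show a 0 = b 0; omega
  · show a 1 = b 1; omega

lemma aeval_sq_eq_sum (p : MvPolynomial (Fin 2) ℚ) :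
    aeval ![X 0, X 1 ^ 2] p = ∑ m ∈ p.support, (monomial (d2 m) (coeff m p)
      : MvPolynomial (Fin 2) ℚ) := by
  conv_lhs => rw [p.as_sum]
  rw [map_sum]
  exact Finset.sum_congr rfl fun m _ => aeval_sq_monomial m _

lemma injective_aeval_sq (p : MvPolynomial (Fin 2) ℚ)
    (h : aeval ![X 0, X 1 ^ 2] p = (0 : MvPolynomial (Fin 2) ℚ)) : p = 0 := by
  by_contra hp
  obtain ⟨m₀, hm₀⟩ := Finset.nonempty_of_ne_empty (fun he => hp (support_eq_empty.mp he))
  have := congrArg (coeff (d2 m₀)) (aeval_sq_eq_sum p ▸ h)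
  rw [coeff_sum] at this
  rw [Finset.sum_eq_single_of_mem m₀ hm₀ (fun b _ hb => by
    rw [coeff_monomial, if_neg (fun hc => hb (d2_inj hc))])] at this
  rw [coeff_monomial, if_pos rfl, coeff_zero] at this
  exact (mem_support_iff.mp hm₀) this

lemma nu_coeff (p : MvPolynomial (Fin 2) ℚ) (m : Fin 2 →₀ ℕ) :
    coeff m (aeval ![X 0, -X 1] p : MvPolynomial (Fin 2) ℚ) = (-1) ^ (m 1) * coeff m p := by
  conv_lhs => rw [p.as_sum]
  rw [map_sum]
  have : ∀ m' ∈ p.support, (aeval ![X 0, -X 1] (monomial m' (coeff m' p))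
      : MvPolynomial (Fin 2) ℚ) = monomial m' ((-1) ^ (m' 1) * coeff m' p) :=
    fun m' _ => aeval_nu_monomial m' _
  rw [Finset.sum_congr rfl this, coeff_sum]
  by_cases hm : m ∈ p.support
  · rw [Finset.sum_eq_single_of_mem m hm (fun b _ hb => by
      rw [coeff_monomial, if_neg hb]), coeff_monomial, if_pos rfl]
  · rw [Finset.sum_eq_zero (fun b hb => by
      rw [coeff_monomial, if_neg (by rintro rfl; exact hm hb)])]
    rw [notMem_support_iff.mp hm, mul_zero]

lemma even_exists (Q : MvPolynomial (Fin 2) ℚ) (h : ∀ m ∈ Q.support, 2 ∣ m 1) :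
    ∃ P : MvPolynomial (Fin 2) ℚ, aeval ![X 0, X 1 ^ 2] P = Q := by
  refine ⟨∑ m ∈ Q.support, monomial
    (Finsupp.single 0 (m 0) + Finsupp.single 1 (m 1 / 2)) (coeff m Q), ?_⟩
  rw [map_sum]
  have key : ∀ m ∈ Q.support, (aeval ![X 0, X 1 ^ 2] (monomial
      (Finsupp.single 0 (m 0) + Finsupp.single 1 (m 1 / 2)) (coeff m Q))
      : MvPolynomial (Fin 2) ℚ) = monomial m (coeff m Q) := by
    intro m hm
    rw [aeval_sq_monomial]
    congr 1
    have e0 : (Finsupp.single (0 : Fin 2) (m 0) + Finsupp.single (1 : Fin 2) (m 1 / 2)) 0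
        = m 0 := by simp
    have e1 : (Finsupp.single (0 : Fin 2) (m 0) + Finsupp.single (1 : Fin 2) (m 1 / 2)) 1
        = m 1 / 2 := by simp
    rw [e0, e1, Nat.mul_div_cancel' (h m hm), fin2_finsupp]
  rw [Finset.sum_congr rfl key, ← Q.as_sum]

lemma key (Q : MvPolynomial (Fin 2) ℚ)
    (hQ : aeval ![sigma 2, sigma 3] Q ∈ idealSigma1) : Q = 0 := by
  classical
  let K := FractionRing (MvPolynomial (Fin 2) ℚ)
  let L := AlgebraicClosure K
  haveI : CharZero K :=
    charZero_of_injective_algebraMap (IsFractionRing.injective (MvPolynomial (Fin 2) ℚ) K)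
  let g : MvPolynomial (Fin 2) ℚ →+* L :=
    (algebraMap K L).comp (algebraMap (MvPolynomial (Fin 2) ℚ) K)
  have hg : Function.Injective g :=
    (algebraMap K L).injective.comp (IsFractionRing.injective (MvPolynomial (Fin 2) ℚ) K)
  have hst : AlgebraicIndependent ℚ (g ∘ (X : Fin 2 → MvPolynomial (Fin 2) ℚ)) :=
    (MvPolynomial.algebraicIndependent_X (Fin 2) ℚ).ringHom_of_comp_eq (RingHom.id ℚ) g
      Function.surjective_id hg (Subsingleton.elim _ _)
  set s : L := g (X 0) with hs
  set t : L := g (X 1) with ht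
  set f : Polynomial L := Polynomial.X ^ 3 + Polynomial.C s * Polynomial.X - Polynomial.C t
    with hf
  have hdeg : f.natDegree = 3 := by rw [hf]; compute_degree!
  have hmonic : f.Monic := by rw [hf]; monicity!
  have hsplits : f.Splits := IsAlgClosed.splits f
  have hcard : Multiset.card f.roots = 3 :=
    (Polynomial.splits_iff_card_roots.mp hsplits).trans hdeg
  obtain ⟨a, b, c, habc⟩ := Multiset.card_eq_three.mp hcard
  set r : Fin 3 → L := ![a, b, c] with hr
  have hmap : Finset.univ.val.map r = f.roots := by
    rw [habc]
    rfl
  have hE : ∀ n, aeval r (esymm (Fin 3) ℚ n) = f.roots.esymm n := by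
    intro n
    rw [aeval_esymm_eq_multiset_esymm, hmap]
  have hlc : f.leadingCoeff = 1 := hmonic
  have hco : ∀ k : ℕ, k ≤ 3 → f.coeff k
      = (-1 : L) ^ (3 - k) * f.roots.esymm (3 - k) := by
    intro k hk
    rw [Polynomial.coeff_eq_esymm_roots_of_splits hsplits (hdeg ▸ hk), hdeg, hlc, one_mul]
  have hc2 : f.coeff 2 = 0 := by
    simp [hf, Polynomial.coeff_X, Polynomial.coeff_C]
  have hc1 : f.coeff 1 = s := by
    simp [hf, Polynomial.coeff_X, Polynomial.coeff_C]
  have hc0 : f.coeff 0 = -t := by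
    simp [hf, Polynomial.coeff_X, Polynomial.coeff_C]
  have he1 : f.roots.esymm 1 = 0 := by
    have := hco 2 (by norm_num)
    rw [hc2] at this
    norm_num at this
    exact this
  have he2 : f.roots.esymm 2 = s := by
    have := hco 1 (by norm_num)
    rw [hc1] at this
    norm_num at this
    exact this.symm
  have he3 : f.roots.esymm 3 = t := by
    have := hco 0 (by norm_num)
    rw [hc0] at this
    norm_num at this
    linear_combination this
  have hker : aeval r (aeval ![sigma 2, sigma 3] Q) = 0 := by
    obtain ⟨u, hu⟩ := Ideal.mem_span_singleton'.mp hQ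
    rw [← hu, map_mul]
    have : aeval r (sigma 1) = 0 := by
      rw [sigma, hE 1, he1]
    rw [this, mul_zero]
  rw [comp_aeval_apply] at hker
  have hfam : (fun i : Fin 2 => aeval r (![sigma 2, sigma 3] i))
      = g ∘ (X : Fin 2 → MvPolynomial (Fin 2) ℚ) := by
    funext i
    fin_cases i
    · show aeval r (sigma 2) = g (X 0)
      rw [sigma, hE 2, he2]
    · show aeval r (sigma 3) = g (X 1)
      rw [sigma, hE 3, he3]
  rw [hfam] at hker
  exact (injective_iff_map_eq_zero _).mp hst Q hker

/-- the family `σ₂, σ₃` in the quotient -/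
noncomputable def mkfam : Fin 2 → MvPolynomial (Fin 3) ℚ ⧸ idealSigma1 :=
  fun i => Ideal.Quotient.mk idealSigma1 (![sigma 2, sigma 3] i)

lemma mk_aeval (q : MvPolynomial (Fin 2) ℚ) :
    Ideal.Quotient.mk idealSigma1 (aeval ![sigma 2, sigma 3] q) = aeval mkfam q := by
  have := comp_aeval_apply (R := ℚ) (Ideal.Quotient.mkₐ ℚ idealSigma1)
    (f := ![sigma 2, sigma 3]) q
  unfold mkfam
  simpa [Ideal.Quotient.mkₐ_eq_mk] using this

lemma key_inj (p : MvPolynomial (Fin 2) ℚ) (h : aeval mkfam p = 0) : p = 0 := by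
  apply key
  rw [← Ideal.Quotient.eq_zero_iff_mem, mk_aeval, h]

/-- `aeval mkfam` as an algebra hom with explicit source. -/
noncomputable def mkA : MvPolynomial (Fin 2) ℚ →ₐ[ℚ] (MvPolynomial (Fin 3) ℚ ⧸ idealSigma1) :=
  aeval mkfam

/-- `aeval ![σ₂, σ₃]` as an algebra hom with explicit source. -/
noncomputable def sA : MvPolynomial (Fin 2) ℚ →ₐ[ℚ] MvPolynomial (Fin 3) ℚ :=
  aeval ![sigma 2, sigma 3]

end InvariantAux

open InvariantAux in
/-- The invariant ring `(ℚ[x₁,x₂,x₃]/(x₁+x₂+x₃))^{S₃ ⋉ (±1)}` — the symmetric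
polynomials invariant under simultaneous sign change, in the quotient by
`σ₁ = 0` — is isomorphic as a graded ring to `ℚ[σ₂, σ₃²]`:
(1) the images of `σ₂` and `σ₃²` in the quotient are algebraically independent
    over `ℚ` (so they generate a polynomial ring);
(2) `σ₂` and `σ₃²` are homogeneous of degrees `2` and `6` (gradedness);
(3) every polynomial in `σ₂, σ₃²` is symmetric and invariant under the sign
    change; and
(4) every symmetric, sign-invariant polynomial agrees modulo `(σ₁)` with a
    polynomial in `σ₂` and `σ₃²`. -/
theorem invariant_ring_iso_polynomial_ring :
    (AlgebraicIndependent ℚ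
      fun i : Fin 2 => Ideal.Quotient.mk idealSigma1 (invGens i)) ∧
    ((sigma 2).IsHomogeneous 2 ∧ (sigma 3 ^ 2).IsHomogeneous 6) ∧
    (∀ P : MvPolynomial (Fin 2) ℚ, ∀ g : Equiv.Perm (Fin 3),
      rename g (aeval invGens P) = aeval invGens P) ∧
    (∀ P : MvPolynomial (Fin 2) ℚ,
      signChange (aeval invGens P) = aeval invGens P) ∧
    (∀ f : MvPolynomial (Fin 3) ℚ,
      (∀ g : Equiv.Perm (Fin 3), rename g f = f) →
      signChange f = f →
      ∃ P : MvPolynomial (Fin 2) ℚ, f - aeval invGens P ∈ idealSigma1) := by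
  have hGens : (fun i : Fin 2 => mkA ((![X 0, X 1 ^ 2] : Fin 2 → MvPolynomial (Fin 2) ℚ) i))
      = fun i : Fin 2 => Ideal.Quotient.mk idealSigma1 (invGens i) := by
    funext i
    fin_cases i
    · show mkA (X 0) = Ideal.Quotient.mk idealSigma1 (sigma 2)
      rw [mkA, aeval_X]
      rfl
    · show mkA (X 1 ^ 2) = Ideal.Quotient.mk idealSigma1 (sigma 3 ^ 2)
      rw [mkA, map_pow, aeval_X, map_pow]
      rfl
  have hinvfam : (fun i : Fin 2 =>
      sA ((![X 0, X 1 ^ 2] : Fin 2 → MvPolynomial (Fin 2) ℚ) i)) = invGens := by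
    funext i
    fin_cases i
    · show sA (X 0) = invGens 0
      rw [sA, aeval_X]
      rfl
    · show sA (X 1 ^ 2) = invGens 1
      rw [sA, map_pow, aeval_X]
      rfl
  refine ⟨?_, ⟨?_, ?_⟩, ?_, ?_, ?_⟩
  · -- (1) algebraic independence
    rw [algebraicIndependent_iff]
    intro p hp
    have hp' : mkA (aeval ![X 0, X 1 ^ 2] p) = 0 := by
      rw [comp_aeval_apply (φ := mkA) (f := ![X 0, X 1 ^ 2]), hGens]
      exact hp
    exact injective_aeval_sq p (key_inj _ hp')
  · exact esymm_homog 2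
  · simpa [sigma] using (esymm_homog 3).pow 2
  · -- (3) symmetry
    intro P g
    have hfix : (fun i : Fin 2 => rename (g : Fin 3 → Fin 3) (invGens i)) = invGens := by
      funext i
      fin_cases i
      · show rename (g : Fin 3 → Fin 3) (sigma 2) = sigma 2
        rw [sigma, rename_esymm]
      · show rename (g : Fin 3 → Fin 3) (sigma 3 ^ 2) = sigma 3 ^ 2
        rw [map_pow, sigma, rename_esymm]
    rw [comp_aeval_apply
      (φ := (rename (g : Fin 3 → Fin 3) : MvPolynomial (Fin 3) ℚ →ₐ[ℚ] MvPolynomial (Fin 3) ℚ))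
      (f := invGens), hfix]
  · -- (4) sign invariance
    intro P
    have hfix : (fun i : Fin 2 => signChange (invGens i)) = invGens := by
      funext i
      fin_cases i
      · show signChange (sigma 2) = sigma 2
        exact signChange_sigma2
      · show signChange (sigma 3 ^ 2) = sigma 3 ^ 2
        rw [map_pow, signChange_sigma3]
        ring
    rw [comp_aeval_apply (φ := signChange) (f := invGens), hfix]
  · -- (5) surjectivity mod the ideal
    intro f hsym hsign
    obtain ⟨Q₃, hQ₃⟩ := esymmAlgHom_surjective (σ := Fin 3) (R := ℚ) (n := 3)
      (by simp) ⟨f, fun e => hsym e⟩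
    have hQ3 : aeval (fun i : Fin 3 => esymm (Fin 3) ℚ ((i : ℕ) + 1)) Q₃ = f := by
      rw [← esymmAlgHom_apply, hQ₃]
    set M : Fin 3 → MvPolynomial (Fin 2) ℚ := ![0, X 0, X 1] with hM
    set Q' : MvPolynomial (Fin 2) ℚ := aeval M Q₃ with hQ'
    have hmk1 : Ideal.Quotient.mk idealSigma1 (sigma 1) = 0 :=
      Ideal.Quotient.eq_zero_iff_mem.mpr (Ideal.mem_span_singleton_self _)
    have hfm : (fun i : Fin 3 => mkA (M i))
        = fun i : Fin 3 => Ideal.Quotient.mk idealSigma1 (esymm (Fin 3) ℚ ((i : ℕ) + 1)) := by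
      funext i
      fin_cases i
      · show mkA (0 : MvPolynomial (Fin 2) ℚ)
          = Ideal.Quotient.mk idealSigma1 (esymm (Fin 3) ℚ 1)
        rw [map_zero, ← sigma, hmk1]
      · show mkA (X 0) = Ideal.Quotient.mk idealSigma1 (esymm (Fin 3) ℚ 2)
        rw [mkA, aeval_X]
        rfl
      · show mkA (X 1) = Ideal.Quotient.mk idealSigma1 (esymm (Fin 3) ℚ 3)
        rw [mkA, aeval_X]
        rfl
    have step1 : Ideal.Quotient.mk idealSigma1
          (aeval (fun i : Fin 3 => esymm (Fin 3) ℚ ((i : ℕ) + 1)) Q₃)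
        = aeval (fun i : Fin 3 =>
            Ideal.Quotient.mk idealSigma1 (esymm (Fin 3) ℚ ((i : ℕ) + 1))) Q₃ := by
      have := comp_aeval_apply (R := ℚ) (φ := Ideal.Quotient.mkₐ ℚ idealSigma1)
        (f := fun i : Fin 3 => esymm (Fin 3) ℚ ((i : ℕ) + 1)) Q₃
      simpa [Ideal.Quotient.mkₐ_eq_mk] using this
    have step2 : mkA Q' = aeval (fun i : Fin 3 => mkA (M i)) Q₃ :=
      comp_aeval_apply (φ := mkA) (f := M) Q₃
    have hmkf : Ideal.Quotient.mk idealSigma1 f = mkA Q' := by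
      rw [← hQ3, step1, step2, hfm]
    have hmkA : ∀ q : MvPolynomial (Fin 2) ℚ,
        Ideal.Quotient.mk idealSigma1 (sA q) = mkA q := fun q => mk_aeval q
    have h2 : f - sA Q' ∈ idealSigma1 := by
      rw [← Ideal.Quotient.eq_zero_iff_mem, map_sub, hmkA, hmkf, sub_self]
    -- sign invariance gives Q' = ν Q'
    have hsc : signChange (sA Q') = sA (aeval ![X 0, -X 1] Q') := by
      have hfam1 : (fun i : Fin 2 =>
          signChange ((![sigma 2, sigma 3] : Fin 2 → MvPolynomial (Fin 3) ℚ) i))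
          = fun i : Fin 2 => sA ((![X 0, -X 1] : Fin 2 → MvPolynomial (Fin 2) ℚ) i) := by
        funext i
        fin_cases i
        · show signChange (sigma 2) = sA (X 0)
          rw [signChange_sigma2, sA, aeval_X]
          rfl
        · show signChange (sigma 3) = sA (-X 1)
          rw [signChange_sigma3, map_neg, sA, aeval_X]
          rfl
      show signChange (aeval ![sigma 2, sigma 3] Q') = sA (aeval ![X 0, -X 1] Q')
      rw [comp_aeval_apply (φ := signChange) (f := ![sigma 2, sigma 3]), hfam1,
        ← comp_aeval_apply (φ := sA) (f := ![X 0, -X 1])]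
    have h3 : f - sA (aeval ![X 0, -X 1] Q') ∈ idealSigma1 := by
      obtain ⟨u, hu⟩ := Ideal.mem_span_singleton'.mp h2
      rw [← hsc]
      have happ := congrArg signChange hu
      rw [map_mul, map_sub, hsign, signChange_sigma1] at happ
      exact Ideal.mem_span_singleton'.mpr ⟨-signChange u, by linear_combination happ⟩
    have h4 : aeval ![X 0, -X 1] Q' = Q' := by
      apply sub_eq_zero.mp
      apply key_inj
      show aeval mkfam (aeval ![X 0, -X 1] Q' - Q') = 0
      have e2 := (Ideal.Quotient.eq_zero_iff_mem.mpr h2)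
      have e3 := (Ideal.Quotient.eq_zero_iff_mem.mpr h3)
      rw [map_sub, sub_eq_zero, hmkA, hmkf] at e2 e3
      show mkA (aeval ![X 0, -X 1] Q' - Q') = 0
      rw [map_sub, sub_eq_zero, ← e2, ← e3]
    have h5 : ∀ m ∈ Q'.support, 2 ∣ m 1 := by
      intro m hm
      rcases Nat.even_or_odd (m 1) with he | ho
      · exact he.two_dvd
      · exfalso
        have := nu_coeff Q' m
        rw [h4, ho.neg_one_pow, neg_one_mul] at this
        have hzero : coeff m Q' = 0 := by linarith
        exact mem_support_iff.mp hm hzero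
    obtain ⟨P, hP⟩ := even_exists Q' h5
    refine ⟨P, ?_⟩
    have hAP : aeval invGens P = sA Q' := by
      rw [← hP, ← hinvfam, ← comp_aeval_apply (φ := sA) (f := ![X 0, X 1 ^ 2])]
    rw [hAP]
    exact h2
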